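/- Let D ⊂ ℝ² be a bounded measurable set and W ∈ L¹(D×D). If (ζ_j) is a sequence in L∞(D) with sup_j ‖ζ_j‖_{L∞} < ∞ which converges to ζ in the weak-* topology of L∞(D) (as the dual of L¹(D)), then ∬_{D×D} W(x,y)·ζ_j(x)·ζ_j(y) dm(x) dm(y) → ∬_{D×D} W(x,y)·ζ(x)·ζ(y) dm(x) dm(y) as j → ∞. -/

import Mathlib

open MeasureTheory Metric Real Set Filter

noncomputable section

abbrev Pt : Type := EuclideanSpace ℝ (Fin 2)

/-- Weak-* continuity of the quadratic form associated with a kernel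
`W ∈ L¹(D×D)`: if `ζ_j` is uniformly bounded in `L∞(D)` and `ζ_j → ζ`
weakly-* in `L∞(D)` (as the dual of `L¹(D)`), then
`∬ W ζ_j ⊗ ζ_j → ∬ W ζ ⊗ ζ`. -/
theorem stmt2
    (D : Set Pt) (hDbdd : Bornology.IsBounded D) (hDm : MeasurableSet D)
    (W : Pt → Pt → ℝ)
    (hW : Integrable (fun p : Pt × Pt => W p.1 p.2)
      ((volume.restrict D).prod (volume.restrict D)))
    (ζj : ℕ → Pt → ℝ) (ζ : Pt → ℝ)
    (hζjm : ∀ j, Measurable (ζj j)) (hζm : Measurable ζ)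
    (M : ℝ) (hbd : ∀ j, ∀ᵐ x ∂(volume.restrict D), |ζj j x| ≤ M)
    (M' : ℝ) (hζbd : ∀ᵐ x ∂(volume.restrict D), |ζ x| ≤ M')
    (hweak : ∀ h : Pt → ℝ, Integrable h (volume.restrict D) →
      Tendsto (fun j => ∫ x in D, ζj j x * h x) atTop (nhds (∫ x in D, ζ x * h x))) :
    Tendsto (fun j => ∫ x in D, ∫ y in D, W x y * ζj j x * ζj j y) atTop
      (nhds (∫ x in D, ∫ y in D, W x y * ζ x * ζ y)) := by
  set μ := volume.restrict D with hμ
  -- abbreviations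
  set k : Pt → ℝ := fun x => ∫ y, ‖W x y‖ ∂μ with hkdef
  set g : Pt → ℝ := fun x => ∫ y, W x y * ζ y ∂μ with hgdef
  set gj : ℕ → Pt → ℝ := fun j x => ∫ y, W x y * ζj j y ∂μ with hgjdef
  have hk : Integrable k μ := hW.integral_norm_prod_left
  -- a.e. slice integrability
  have hWslice : ∀ᵐ x ∂μ, Integrable (fun y => W x y) μ := hW.prod_right_ae
  -- measurability of g, gj
  have hWae := hW.aestronglyMeasurable
  have hgm : AEStronglyMeasurable g μ := by
    have : AEStronglyMeasurable (fun p : Pt × Pt => W p.1 p.2 * ζ p.2) (μ.prod μ) :=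
      hWae.mul ((hζm.comp measurable_snd).aestronglyMeasurable)
    exact this.integral_prod_right'
  have hgjm : ∀ j, AEStronglyMeasurable (gj j) μ := by
    intro j
    have : AEStronglyMeasurable (fun p : Pt × Pt => W p.1 p.2 * ζj j p.2) (μ.prod μ) :=
      hWae.mul (((hζjm j).comp measurable_snd).aestronglyMeasurable)
    exact this.integral_prod_right'
  -- a.e. bounds for g, gj
  have hgbd : ∀ᵐ x ∂μ, |g x| ≤ |M'| * k x := by
    filter_upwards [hWslice] with x hx
    have h1 : ‖∫ y, W x y * ζ y ∂μ‖ ≤ ∫ y, |M'| * ‖W x y‖ ∂μ := by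
      refine norm_integral_le_of_norm_le (hx.norm.const_mul _) ?_
      filter_upwards [hζbd] with y hy
      calc ‖W x y * ζ y‖ = ‖W x y‖ * |ζ y| := by
            rw [norm_mul]; rfl
        _ ≤ ‖W x y‖ * |M'| := by
            exact mul_le_mul_of_nonneg_left (hy.trans (le_abs_self M')) (norm_nonneg _)
        _ = |M'| * ‖W x y‖ := by ring
    simpa [hgdef, hkdef, integral_const_mul] using h1
  have hgjbd : ∀ j, ∀ᵐ x ∂μ, |gj j x| ≤ |M| * k x := by
    intro j
    filter_upwards [hWslice] with x hx
    have h1 : ‖∫ y, W x y * ζj j y ∂μ‖ ≤ ∫ y, |M| * ‖W x y‖ ∂μ := by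
      refine norm_integral_le_of_norm_le (hx.norm.const_mul _) ?_
      filter_upwards [hbd j] with y hy
      calc ‖W x y * ζj j y‖ = ‖W x y‖ * |ζj j y| := by rw [norm_mul]; rfl
        _ ≤ ‖W x y‖ * |M| := mul_le_mul_of_nonneg_left (hy.trans (le_abs_self M)) (norm_nonneg _)
        _ = |M| * ‖W x y‖ := by ring
    simpa [hgjdef, hkdef, integral_const_mul] using h1
  -- integrability of g and gj
  have hgint : Integrable g μ :=
    Integrable.mono' (hk.const_mul |M'|) hgm (by
      filter_upwards [hgbd] with x hx; simpa using hx)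
  have hgjint : ∀ j, Integrable (gj j) μ :=
    fun j => Integrable.mono' (hk.const_mul |M|) (hgjm j) (by
      filter_upwards [hgjbd j] with x hx; simpa using hx)
  -- pointwise a.e. convergence gj → g
  have hptwise : ∀ᵐ x ∂μ, Tendsto (fun j => gj j x) atTop (nhds (g x)) := by
    filter_upwards [hWslice] with x hx
    have := hweak (fun y => W x y) hx
    simp only [hgjdef, hgdef]
    have e1 : ∀ j, (∫ y, W x y * ζj j y ∂μ) = ∫ y in D, ζj j y * W x y := by
      intro j; rw [hμ]; congr 1; ext y; ring
    have e2 : (∫ y, W x y * ζ y ∂μ) = ∫ y in D, ζ y * W x y := by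
      rw [hμ]; congr 1; ext y; ring
    rw [e2]; simp only [e1]; exact this
  -- L¹ convergence of gj to g
  have hL1 : Tendsto (fun j => ∫ x, |gj j x - g x| ∂μ) atTop (nhds 0) := by
    have h0 : (0 : ℝ) = ∫ x, (0 : ℝ) ∂μ := by simp
    rw [h0]
    refine tendsto_integral_of_dominated_convergence (fun x => |M| * k x + |M'| * k x)
      (fun j => ((hgjm j).sub hgm).norm) ((hk.const_mul |M|).add (hk.const_mul |M'|)) ?_ ?_
    · intro j
      filter_upwards [hgjbd j, hgbd] with x h1 h2
      have : |gj j x - g x| ≤ |gj j x| + |g x| := abs_sub _ _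
      calc ‖|gj j x - g x|‖ = |gj j x - g x| := by simp [abs_abs]
        _ ≤ |gj j x| + |g x| := this
        _ ≤ |M| * k x + |M'| * k x := add_le_add h1 h2
    · filter_upwards [hptwise] with x hx
      have : Tendsto (fun j => gj j x - g x) atTop (nhds (g x - g x)) :=
        hx.sub tendsto_const_nhds
      simpa using this.abs
  -- the first piece: ∫ ζj j * (gj j - g) → 0
  have hterm1 : Tendsto (fun j => ∫ x, ζj j x * (gj j x - g x) ∂μ) atTop (nhds 0) := by
    have hb : ∀ j, |∫ x, ζj j x * (gj j x - g x) ∂μ| ≤ |M| * ∫ x, |gj j x - g x| ∂μ := by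
      intro j
      have habs : Integrable (fun x => |gj j x - g x|) μ := ((hgjint j).sub hgint).abs
      have h1 : ‖∫ x, ζj j x * (gj j x - g x) ∂μ‖ ≤ ∫ x, |M| * |gj j x - g x| ∂μ := by
        refine norm_integral_le_of_norm_le (habs.const_mul _) ?_
        filter_upwards [hbd j] with x hx
        calc ‖ζj j x * (gj j x - g x)‖ = |ζj j x| * |gj j x - g x| := by
              rw [norm_mul]; rfl
          _ ≤ |M| * |gj j x - g x| :=
              mul_le_mul_of_nonneg_right (hx.trans (le_abs_self M)) (abs_nonneg _)
      simpa [integral_const_mul] using h1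
    have h2 : Tendsto (fun j => |M| * ∫ x, |gj j x - g x| ∂μ) atTop (nhds 0) := by
      simpa using hL1.const_mul |M|
    refine squeeze_zero_norm (fun j => ?_) h2
    simpa using hb j
  -- the second piece: ∫ ζj j * g → ∫ ζ * g
  have hterm2 : Tendsto (fun j => ∫ x, ζj j x * g x ∂μ) atTop (nhds (∫ x, ζ x * g x ∂μ)) :=
    hweak g hgint
  -- combine
  have hsplit : ∀ j, (∫ x, ζj j x * gj j x ∂μ)
      = (∫ x, ζj j x * (gj j x - g x) ∂μ) + ∫ x, ζj j x * g x ∂μ := by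
    intro j
    have i1 : Integrable (fun x => ζj j x * (gj j x - g x)) μ :=
      ((hgjint j).sub hgint).bdd_mul (hζjm j).aestronglyMeasurable (hbd j)
    have i2 : Integrable (fun x => ζj j x * g x) μ :=
      hgint.bdd_mul (hζjm j).aestronglyMeasurable (hbd j)
    rw [← integral_add i1 i2]
    congr 1; ext x; ring
  have hmain : Tendsto (fun j => ∫ x, ζj j x * gj j x ∂μ) atTop
      (nhds (∫ x, ζ x * g x ∂μ)) := by
    have := hterm1.add hterm2
    rw [zero_add] at this
    simpa only [← hsplit] using this
  -- rewrite the original statement into this form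
  have erw1 : ∀ j, (∫ x in D, ∫ y in D, W x y * ζj j x * ζj j y)
      = ∫ x, ζj j x * gj j x ∂μ := by
    intro j
    rw [hμ]; congr 1; ext x
    rw [hgjdef]
    have : ∀ y, W x y * ζj j x * ζj j y = ζj j x * (W x y * ζj j y) := fun y => by ring
    simp only [this]
    rw [integral_const_mul]
  have erw2 : (∫ x in D, ∫ y in D, W x y * ζ x * ζ y) = ∫ x, ζ x * g x ∂μ := by
    rw [hμ]; congr 1; ext x
    rw [hgdef]
    have : ∀ y, W x y * ζ x * ζ y = ζ x * (W x y * ζ y) := fun y => by ring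
    simp only [this]
    rw [integral_const_mul]
  rw [erw2]
  exact (tendsto_congr erw1).mpr hmain
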